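/- arXiv:2108.04563 — 6 statements merged into one kernel-verified Lean document; each statement's English description precedes it below -/
import Mathlib

section
/- Let G be a simple graph on a finite vertex type V with a weight function assigning a strictly positive real weight to each edge, let U be a finset of vertices, and let W be a finset of edges with ∂W = U whose total weight is minimal among all finsets of edges with boundary U. Then the spanning subgraph of G with edge set W is acyclic (contains no cycle). -/
/-- The boundary of a finset `W` of edges (elements of `Sym2 V`):
the finset of vertices incident to an odd number of edges in `W`. -/
def graphBoundary {V : Type*} [Fintype V] [DecidableEq V]
    (W : Finset (Sym2 V)) : Finset V :=
  Finset.univ.filter fun v => Odd ((W.filter fun e => v ∈ e).card)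

/-- Let `G` be a simple graph with strictly positive edge
weights, `U` a finset of vertices, and `W` a finset of edges of `G` with
`∂W = U` of minimal total weight among all finsets of edges of `G` with
boundary `U`.  Then the spanning subgraph of `G` with edge set `W` is acyclic. -/
theorem stmt_5 {V : Type*} [Fintype V] [DecidableEq V] (G : SimpleGraph V)
    (w : Sym2 V → ℝ) (hw : ∀ e ∈ G.edgeSet, 0 < w e)
    (U : Finset V) (W : Finset (Sym2 V)) (hWE : ∀ e ∈ W, e ∈ G.edgeSet)
    (hbd : graphBoundary W = U)
    (hmin : ∀ W' : Finset (Sym2 V), (∀ e ∈ W', e ∈ G.edgeSet) →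
      graphBoundary W' = U → ∑ e ∈ W, w e ≤ ∑ e ∈ W', w e) :
    (SimpleGraph.fromEdgeSet (↑W : Set (Sym2 V))).IsAcyclic := by
  intro v p hp
  -- edges of the cycle
  set C : Finset (Sym2 V) := p.edges.toFinset with hC
  have hCW : C ⊆ W := by
    intro e he
    rw [hC, List.mem_toFinset] at he
    have := p.edges_subset_edgeSet he
    rw [SimpleGraph.edgeSet_fromEdgeSet] at this
    exact this.1
  -- C is nonempty
  have hlen : 3 ≤ p.length := hp.three_le_length
  have hCne : C.Nonempty := by
    rw [hC]
    have : p.edges ≠ [] := by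
      intro h
      have := p.length_edges
      rw [h] at this
      simp at this
      omega
    exact (List.toFinset_nonempty_iff p.edges).mpr this
  set W' : Finset (Sym2 V) := W \ C with hW'
  -- each vertex is in an even number of edges of C
  have hevenC : ∀ x : V, Even ((C.filter fun e => x ∈ e).card) := by
    intro x
    have hnd : p.edges.Nodup := hp.edges_nodup
    have h1 : Even (p.edges.countP fun e => x ∈ e) :=
      (hp.isTrail.even_countP_edges_iff x).mpr (fun h => absurd rfl h)
    have h2 : (C.filter fun e => x ∈ e) = (p.edges.filter fun e => decide (x ∈ e)).toFinset := by
      rw [hC, List.toFinset_filter]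
      simp
    rw [h2, List.card_toFinset, (hnd.filter _).dedup]
    rwa [List.countP_eq_length_filter] at h1
  -- boundary of W' equals U
  have hbd' : graphBoundary W' = U := by
    rw [← hbd]
    unfold graphBoundary
    apply Finset.filter_congr
    intro x _
    have hsplit : (W.filter fun e => x ∈ e).card
        = (W'.filter fun e => x ∈ e).card + (C.filter fun e => x ∈ e).card := by
      have hfs : (W \ C).filter (fun e => x ∈ e) = W.filter (fun e => x ∈ e) \ C.filter (fun e => x ∈ e) := by
        ext e
        simp only [Finset.mem_filter, Finset.mem_sdiff]
        tauto
      rw [hW', hfs, Finset.card_sdiff_of_subset (Finset.filter_subset_filter _ hCW)]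
      have hle : (C.filter fun e => x ∈ e).card ≤ (W.filter fun e => x ∈ e).card :=
        Finset.card_le_card (Finset.filter_subset_filter _ hCW)
      omega
    obtain ⟨k, hk⟩ := hevenC x
    simp only [hsplit, hk]
    rw [Nat.odd_iff, Nat.odd_iff]
    omega
  -- weights
  have hW'E : ∀ e ∈ W', e ∈ G.edgeSet := fun e he => hWE e (Finset.mem_sdiff.mp he).1
  have hsum : ∑ e ∈ W', w e + ∑ e ∈ C, w e = ∑ e ∈ W, w e :=
    Finset.sum_sdiff hCW
  have hpos : 0 < ∑ e ∈ C, w e :=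
    Finset.sum_pos (fun e he => hw e (hWE e (hCW he))) hCne
  have := hmin W' hW'E hbd'
  linarith
end

section
/- Let G be a simple graph on a finite vertex type V, let W be a finset of edges such that the spanning subgraph with edge set W is acyclic, and suppose ∂W = U with v ∈ U. Then there exists a vertex u ∈ U with u ≠ v and a path from v to u in G all of whose edges lie in W. -/
/-- Let `W` be a finset of edges of a simple graph `G` such
that the spanning subgraph with edge set `W` is acyclic, and suppose
`∂W = U` with `v ∈ U`.  Then there is a vertex `u ∈ U` with `u ≠ v` and a
path from `v` to `u` in `G` all of whose edges lie in `W`. -/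
theorem stmt_6 {V : Type*} [Fintype V] [DecidableEq V] (G : SimpleGraph V)
    (W : Finset (Sym2 V)) (hWE : ∀ e ∈ W, e ∈ G.edgeSet)
    (hacyc : (SimpleGraph.fromEdgeSet (↑W : Set (Sym2 V))).IsAcyclic)
    (U : Finset V) (hbd : graphBoundary W = U) (v : V) (hv : v ∈ U) :
    ∃ u ∈ U, u ≠ v ∧ ∃ p : G.Walk v u, p.IsPath ∧ ∀ e ∈ p.edges, e ∈ W := by
  classical
  subst hbd
  set H := SimpleGraph.fromEdgeSet (↑W : Set (Sym2 V)) with hH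
  -- no edge of W is a loop
  have hnd : ∀ e ∈ W, ¬ e.IsDiag := fun e he => G.not_isDiag_of_mem_edgeSet (hWE e he)
  -- degree in H equals number of incident edges in W
  have hdeg : ∀ x : V, H.degree x = (W.filter fun e => x ∈ e).card := by
    intro x
    rw [← SimpleGraph.card_neighborFinset_eq_degree]
    apply Finset.card_bij (fun y _ => s(x, y))
    · intro y hy
      rw [SimpleGraph.mem_neighborFinset, hH, SimpleGraph.fromEdgeSet_adj] at hy
      simp only [Finset.mem_filter, Sym2.mem_iff]
      exact ⟨hy.1, Or.inl trivial⟩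
    · intro a ha b hb hab
      exact Sym2.congr_right.mp hab
    · intro e he
      rw [Finset.mem_filter] at he
      obtain ⟨y, rfl⟩ := Sym2.mem_iff_exists.mp he.2
      refine ⟨y, ?_, rfl⟩
      rw [SimpleGraph.mem_neighborFinset, hH, SimpleGraph.fromEdgeSet_adj]
      refine ⟨he.1, fun h => hnd _ he.1 ?_⟩
      subst h; exact Sym2.mk_isDiag_iff.mpr rfl
  have hmem : ∀ x : V, x ∈ graphBoundary W ↔ Odd (H.degree x) := by
    intro x
    simp [graphBoundary, hdeg]
  -- restrict H to the component of v
  let H' : SimpleGraph V :=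
    { Adj := fun a b => H.Adj a b ∧ H.Reachable v a
      symm := ⟨fun a b h => ⟨h.1.symm, h.2.trans h.1.reachable⟩⟩
      loopless := ⟨fun a h => H.loopless.irrefl a h.1⟩ }
  have hdeg' : ∀ x : V, H'.degree x = if H.Reachable v x then H.degree x else 0 := by
    intro x
    rw [← SimpleGraph.card_neighborFinset_eq_degree]
    split_ifs with hr
    · rw [← SimpleGraph.card_neighborFinset_eq_degree]
      congr 1
      ext y
      simp only [SimpleGraph.mem_neighborFinset]
      exact ⟨fun h => h.1, fun h => ⟨h, hr⟩⟩
    · rw [Finset.card_eq_zero]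
      ext y
      simp only [SimpleGraph.mem_neighborFinset, Finset.notMem_empty, iff_false]
      exact fun h => hr h.2
  have hvodd : Odd (H'.degree v) := by
    rw [hdeg', if_pos (SimpleGraph.Reachable.refl v)]
    exact (hmem v).mp hv
  obtain ⟨u, hune, huodd⟩ := H'.exists_ne_odd_degree_of_exists_odd_degree v hvodd
  have hru : H.Reachable v u := by
    by_contra hr
    rw [hdeg', if_neg hr] at huodd
    simp at huodd
  have huodd' : Odd (H.degree u) := by
    rwa [hdeg', if_pos hru] at huodd
  obtain ⟨w⟩ := hru
  let p := w.toPath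
  have hpW : ∀ e ∈ (p : H.Walk v u).edges, e ∈ W := by
    intro e he
    have := (p : H.Walk v u).edges_subset_edgeSet he
    rw [hH, SimpleGraph.edgeSet_fromEdgeSet] at this
    exact this.1
  refine ⟨u, (hmem u).mpr huodd', hune, (p : H.Walk v u).transfer G
    (fun e he => hWE e (hpW e he)), p.2.transfer _, ?_⟩
  intro e he
  rw [SimpleGraph.Walk.edges_transfer] at he
  exact hpW e he
end

section
/- Let G be a simple graph on a finite vertex type V, let W be a finset of edges such that the spanning subgraph with edge set W is acyclic, and suppose ∂W = U with |U| = 2n. Then there exist n pairs of vertices (v₁,u₁),…,(vₙ,uₙ) whose union of endpoints is exactly U, and pairwise edge-disjoint trails t₁,…,tₙ in G, where tᵢ is a trail from vᵢ to uᵢ, such that the edge finsets of the tᵢ are pairwise disjoint and their union equals W. -/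
namespace Stmt7

open SimpleGraph

variable {V : Type*} [Fintype V] [DecidableEq V]

lemma mem_graphBoundary {W : Finset (Sym2 V)} {w : V} :
    w ∈ graphBoundary W ↔ Odd ((W.filter fun e => w ∈ e).card) := by
  simp [graphBoundary]

lemma boundary_erase {W : Finset (Sym2 V)} {v u : V} (he : s(v,u) ∈ W) (w : V) :
    w ∈ graphBoundary (W.erase s(v,u)) ↔
      if w = v ∨ w = u then w ∉ graphBoundary W else w ∈ graphBoundary W := by
  rw [mem_graphBoundary, mem_graphBoundary, Finset.filter_erase]
  by_cases hw : w = v ∨ w = u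
  · have hmem : s(v,u) ∈ W.filter (fun e => w ∈ e) := by
      refine Finset.mem_filter.mpr ⟨he, ?_⟩
      rcases hw with rfl | rfl <;> simp
    rw [Finset.card_erase_of_mem hmem, if_pos hw]
    have hpos : 0 < (W.filter (fun e => w ∈ e)).card := Finset.card_pos.mpr ⟨_, hmem⟩
    rw [Nat.odd_iff, Nat.odd_iff]
    omega
  · have hnmem : s(v,u) ∉ W.filter (fun e => w ∈ e) := by
      push_neg at hw
      intro hc
      have := (Finset.mem_filter.mp hc).2
      rw [Sym2.mem_iff] at this
      tauto
    rw [Finset.erase_eq_of_notMem hnmem, if_neg hw]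

lemma mem_foldr_union {α β : Type*} [DecidableEq β] (f : α → Finset β) (l : List α) (b : β) :
    b ∈ (l.map f).foldr (· ∪ ·) ∅ ↔ ∃ x ∈ l, b ∈ f x := by
  induction l with
  | nil => simp
  | cons a l ih => simp [ih]

lemma card_foldr_union {β : Type*} [DecidableEq β] (l : List (Finset β))
    (h : l.Pairwise Disjoint) : (l.foldr (· ∪ ·) ∅).card = (l.map Finset.card).sum := by
  induction l with
  | nil => simp
  | cons a l ih =>
    rw [List.pairwise_cons] at h
    have hd : Disjoint a (l.foldr (· ∪ ·) ∅) := by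
      rw [Finset.disjoint_left]
      intro b hb hb'
      have : b ∈ (l.map id).foldr (· ∪ ·) ∅ := by simpa using hb'
      obtain ⟨x, hx, hbx⟩ := (mem_foldr_union id l b).mp this
      exact (Finset.disjoint_left.mp (h.1 x hx) hb) hbx
    simp only [List.foldr_cons, List.map_cons, List.sum_cons]
    rw [Finset.card_union_of_disjoint hd, ih h.2]

variable (G : SimpleGraph V)

abbrev TP := Σ p : V × V, G.Walk p.1 p.2

def pairF (x : TP G) : Finset V := {x.1.1, x.1.2}

def Rel (x y : TP G) : Prop :=
  Disjoint (pairF G x) (pairF G y) ∧ Disjoint x.2.edges.toFinset y.2.edges.toFinset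

lemma Rel.symmetric : Symmetric (Rel G) := fun _ _ h => ⟨h.1.symm, h.2.symm⟩

def Props (W : Finset (Sym2 V)) (L : List (TP G)) : Prop :=
  (∀ x ∈ L, x.2.IsTrail ∧ x.1.1 ≠ x.1.2) ∧
  L.Pairwise (Rel G) ∧
  (∀ w : V, w ∈ graphBoundary W ↔ ∃ x ∈ L, w ∈ pairF G x) ∧
  (∀ e : Sym2 V, e ∈ W ↔ ∃ x ∈ L, e ∈ x.2.edges)

lemma Props_perm {W : Finset (Sym2 V)} {L1 L2 : List (TP G)} (hp : L1.Perm L2)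
    (h : Props G W L1) : Props G W L2 := by
  obtain ⟨h1, h2, h3, h4⟩ := h
  refine ⟨fun x hx => h1 x (hp.symm.subset hx),
    (hp.pairwise_iff (fun h => Rel.symmetric G h)).mp h2,
    fun w => (h3 w).trans ?_, fun e => (h4 e).trans ?_⟩ <;>
    exact ⟨fun ⟨x, hx, hh⟩ => ⟨x, hp.subset hx, hh⟩, fun ⟨x, hx, hh⟩ => ⟨x, hp.symm.subset hx, hh⟩⟩

lemma normalize (x : TP G) {u : V} (hu : u ∈ pairF G x) (ht : x.2.IsTrail)
    (hne : x.1.1 ≠ x.1.2) :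
    ∃ (w : V) (q : G.Walk u w), q.IsTrail ∧ u ≠ w ∧ ({u, w} : Finset V) = pairF G x ∧
      (∀ f, f ∈ q.edges ↔ f ∈ x.2.edges) := by
  obtain ⟨⟨a, b⟩, p⟩ := x
  simp only [pairF, Finset.mem_insert, Finset.mem_singleton] at hu
  rcases hu with rfl | rfl
  · exact ⟨b, p, ht, hne, rfl, fun f => Iff.rfl⟩
  · refine ⟨a, p.reverse, ht.reverse p, hne.symm, ?_, fun f => ?_⟩
    · simp [pairF, Finset.pair_comm]
    · simp [SimpleGraph.Walk.edges_reverse]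

/-- Extension step: `v` is in the boundary, `u` is not. -/
lemma step_extend (W : Finset (Sym2 V)) {v u : V} (hadj : G.Adj v u) (he : s(v,u) ∈ W)
    (hv : v ∈ graphBoundary W) (hu : u ∉ graphBoundary W)
    (hprev : ∃ L', Props G (W.erase s(v,u)) L') : ∃ L, Props G W L := by
  obtain ⟨L', hL'⟩ := hprev
  set W' := W.erase s(v,u) with hW'def
  have henotW' : s(v,u) ∉ W' := Finset.notMem_erase _ _
  have hbe := boundary_erase he
  have hvB' : v ∉ graphBoundary W' := by
    rw [hbe v, if_pos (Or.inl rfl)]; simpa using hv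
  have huB' : u ∈ graphBoundary W' := by
    rw [hbe u, if_pos (Or.inr rfl)]; exact hu
  -- find the piece containing u and move it to the front
  obtain ⟨x, hxL, hxu⟩ := (hL'.2.2.1 u).mp huB'
  obtain ⟨l1, l2, rfl⟩ := List.append_of_mem hxL
  have hL2 : Props G W' (x :: (l1 ++ l2)) := Props_perm G List.perm_middle hL'
  set M := l1 ++ l2 with hMdef
  obtain ⟨hT, hP, hB, hE⟩ := hL2
  have hxT := hT x (List.mem_cons_self)
  rw [List.pairwise_cons] at hP
  -- edges of members are in W'
  have hedgesW' : ∀ y ∈ x :: M, ∀ f ∈ y.2.edges, f ∈ W' := by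
    intro y hy f hf
    exact (hE f).mpr ⟨y, hy, hf⟩
  obtain ⟨w, q, hqT, huw, hpair, hqe⟩ := normalize G x hxu hxT.1 hxT.2
  have hwpair : w ∈ pairF G x := by rw [← hpair]; simp
  have henq : s(v,u) ∉ q.edges := by
    intro hc
    exact henotW' (hedgesW' x (List.mem_cons_self) _ ((hqe _).mp hc))
  refine ⟨⟨(v, w), SimpleGraph.Walk.cons hadj q⟩ :: M, ?_, ?_, ?_, ?_⟩
  · intro y hy
    rcases List.mem_cons.mp hy with rfl | hy
    · refine ⟨(SimpleGraph.Walk.isTrail_cons hadj q).mpr ⟨hqT, henq⟩, ?_⟩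
      intro hvw
      exact hvB' ((hB v).mpr ⟨x, List.mem_cons_self, by
        rw [show v = w from hvw]; exact hwpair⟩)
    · exact hT y (List.mem_cons_of_mem _ hy)
  · rw [List.pairwise_cons]
    refine ⟨?_, hP.2⟩
    intro y hy
    have hrel := hP.1 y hy
    constructor
    · rw [Finset.disjoint_left]
      intro a ha
      simp only [pairF, Finset.mem_insert, Finset.mem_singleton] at ha
      rcases ha with rfl | rfl
      · intro hc
        exact hvB' ((hB a).mpr ⟨y, List.mem_cons_of_mem _ hy, hc⟩)
      · exact Finset.disjoint_left.mp hrel.1 hwpair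
    · rw [Finset.disjoint_left]
      intro f hf hfy
      simp only [List.mem_toFinset, SimpleGraph.Walk.edges_cons, List.mem_cons] at hf
      rw [List.mem_toFinset] at hfy
      rcases hf with rfl | hf
      · exact henotW' (hedgesW' y (List.mem_cons_of_mem _ hy) _ hfy)
      · exact Finset.disjoint_left.mp hrel.2 (List.mem_toFinset.mpr ((hqe f).mp hf))
        |>.elim (List.mem_toFinset.mpr hfy)
  · intro z
    have hzB := hbe z
    have hpairnew : pairF G ⟨(v, w), SimpleGraph.Walk.cons hadj q⟩ = {v, w} := rfl
    by_cases hzv : z = v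
    · subst hzv
      simp only [hv, true_iff]
      exact ⟨_, List.mem_cons_self, by simp [pairF]⟩
    by_cases hzu : z = u
    · subst hzu
      simp only [hu, false_iff]
      rintro ⟨y, hy, hzy⟩
      rcases List.mem_cons.mp hy with rfl | hy
      · simp only [pairF, Finset.mem_insert, Finset.mem_singleton] at hzy
        rcases hzy with rfl | rfl
        · exact hzv rfl
        · exact huw rfl
      · exact Finset.disjoint_left.mp (hP.1 y hy).1 hxu hzy
    · have hzW : z ∈ graphBoundary W ↔ z ∈ graphBoundary W' := by
        rw [hbe z, if_neg (by tauto)]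
      rw [hzW, hB z]
      constructor
      · rintro ⟨y, hy, hzy⟩
        rcases List.mem_cons.mp hy with rfl | hy
        · rw [← hpair] at hzy
          simp only [Finset.mem_insert, Finset.mem_singleton] at hzy
          rcases hzy with rfl | rfl
          · exact absurd rfl hzu
          · exact ⟨_, List.mem_cons_self, by simp [pairF]⟩
        · exact ⟨y, List.mem_cons_of_mem _ hy, hzy⟩
      · rintro ⟨y, hy, hzy⟩
        rcases List.mem_cons.mp hy with rfl | hy
        · simp only [pairF, Finset.mem_insert, Finset.mem_singleton] at hzy
          rcases hzy with rfl | rfl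
          · exact absurd rfl hzv
          · exact ⟨x, List.mem_cons_self, hwpair⟩
        · exact ⟨y, List.mem_cons_of_mem _ hy, hzy⟩
  · intro f
    have hWsplit : f ∈ W ↔ f = s(v,u) ∨ f ∈ W' := by
      rw [hW'def, Finset.mem_erase]
      constructor
      · intro hf
        by_cases h : f = s(v,u)
        · exact Or.inl h
        · exact Or.inr ⟨h, hf⟩
      · rintro (rfl | ⟨_, hf⟩)
        · exact he
        · exact hf
    rw [hWsplit, hE f]
    constructor
    · rintro (rfl | ⟨y, hy, hfy⟩)
      · exact ⟨_, List.mem_cons_self, by simp⟩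
      · rcases List.mem_cons.mp hy with rfl | hy
        · refine ⟨_, List.mem_cons_self, ?_⟩
          simp only [SimpleGraph.Walk.edges_cons, List.mem_cons]
          exact Or.inr ((hqe _).mpr hfy)
        · exact ⟨y, List.mem_cons_of_mem _ hy, hfy⟩
    · rintro ⟨y, hy, hfy⟩
      rcases List.mem_cons.mp hy with rfl | hy
      · simp only [SimpleGraph.Walk.edges_cons, List.mem_cons] at hfy
        rcases hfy with rfl | hfy
        · exact Or.inl rfl
        · exact Or.inr ⟨x, List.mem_cons_self, (hqe _).mp hfy⟩
      · exact Or.inr ⟨y, List.mem_cons_of_mem _ hy, hfy⟩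

/-- Join step: neither `v` nor `u` is in the boundary. -/
lemma step_join (W : Finset (Sym2 V)) {v u : V} (hadj : G.Adj v u) (he : s(v,u) ∈ W)
    (hacyc : (SimpleGraph.fromEdgeSet (↑W : Set (Sym2 V))).IsAcyclic)
    (hv : v ∉ graphBoundary W) (hu : u ∉ graphBoundary W)
    (hprev : ∃ L', Props G (W.erase s(v,u)) L') : ∃ L, Props G W L := by
  obtain ⟨L', hL'⟩ := hprev
  set W' := W.erase s(v,u) with hW'def
  have henotW' : s(v,u) ∉ W' := Finset.notMem_erase _ _
  have hW'W : ∀ f ∈ W', f ∈ W := fun f hf => Finset.mem_of_mem_erase hf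
  have hbe := boundary_erase he
  have hvB' : v ∈ graphBoundary W' := by
    rw [hbe v, if_pos (Or.inl rfl)]; exact hv
  have huB' : u ∈ graphBoundary W' := by
    rw [hbe u, if_pos (Or.inr rfl)]; exact hu
  -- find the piece containing v and move it to the front
  obtain ⟨x, hxL, hxv⟩ := (hL'.2.2.1 v).mp hvB'
  obtain ⟨l1, l2, rfl⟩ := List.append_of_mem hxL
  obtain ⟨M, hL2⟩ : ∃ M, Props G W' (x :: M) :=
    ⟨l1 ++ l2, Props_perm G List.perm_middle hL'⟩
  clear hL' hxL
  obtain ⟨hT, hP, hB, hE⟩ := hL2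
  have hxT := hT x (List.mem_cons_self)
  rw [List.pairwise_cons] at hP
  have hedgesW' : ∀ z ∈ x :: M, ∀ f ∈ z.2.edges, f ∈ W' := by
    intro z hz f hf
    exact (hE f).mpr ⟨z, hz, hf⟩
  obtain ⟨a, q, hqT, hva, hpairx, hqe⟩ := normalize G x hxv hxT.1 hxT.2
  have hapair : a ∈ pairF G x := by rw [← hpairx]; simp
  have henq : s(v,u) ∉ q.edges := fun hc =>
    henotW' (hedgesW' x (List.mem_cons_self) _ ((hqe _).mp hc))
  -- find the piece containing u
  obtain ⟨y, hyL, hyu⟩ := (hB u).mp huB'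
  rcases List.mem_cons.mp hyL with rfl | hyM
  · -- u and v in the same piece: contradiction with acyclicity
    exfalso
    have hua : u = a := by
      rw [← hpairx] at hyu
      simp only [Finset.mem_insert, Finset.mem_singleton] at hyu
      rcases hyu with rfl | rfl
      · exact absurd rfl hadj.ne'
      · rfl
    subst hua
    have hadj' : (SimpleGraph.fromEdgeSet (↑W : Set (Sym2 V))).Adj v u := by
      rw [SimpleGraph.fromEdgeSet_adj]
      exact ⟨by exact_mod_cast he, hadj.ne⟩
    have hbr := (SimpleGraph.isAcyclic_iff_forall_adj_isBridge.mp hacyc) hadj'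
    have hnr := SimpleGraph.isBridge_iff.mp hbr
    apply hnr
    rw [SimpleGraph.reachable_delete_edges_iff_exists_walk]
    have hsub : ∀ f ∈ q.edges, f ∈ (SimpleGraph.fromEdgeSet (↑W : Set (Sym2 V))).edgeSet := by
      intro f hf
      rw [SimpleGraph.edgeSet_fromEdgeSet]
      have h1 : f ∈ W := hW'W f (hedgesW' _ (List.mem_cons_self) _ ((hqe _).mp hf))
      have h2 := SimpleGraph.not_isDiag_of_mem_edgeSet G (q.edges_subset_edgeSet hf)
      exact ⟨by exact_mod_cast h1, h2⟩
    refine ⟨q.transfer _ hsub, ?_⟩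
    rw [SimpleGraph.Walk.edges_transfer]
    exact henq
  · -- different pieces: join them
    obtain ⟨m1, m2, hM⟩ := List.append_of_mem hyM
    obtain ⟨N, hL3⟩ : ∃ N, Props G W' (x :: y :: N) := by
      refine ⟨m1 ++ m2, Props_perm G ?_ ⟨hT, List.pairwise_cons.mpr hP, hB, hE⟩⟩
      rw [hM]
      exact List.Perm.cons _ List.perm_middle
    clear hT hB hE hedgesW' hP hM hyM hyL
    obtain ⟨hT, hP, hB, hE⟩ := hL3
    have hxT2 := hT x (List.mem_cons_self)
    have hyT := hT y (List.mem_cons_of_mem _ (List.mem_cons_self))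
    rw [List.pairwise_cons] at hP
    obtain ⟨hxRel, hP⟩ := hP
    rw [List.pairwise_cons] at hP
    obtain ⟨hyRel, hPN⟩ := hP
    have hxy : Rel G x y := hxRel y (List.mem_cons_self)
    have hedgesW' : ∀ z ∈ x :: y :: N, ∀ f ∈ z.2.edges, f ∈ W' := by
      intro z hz f hf
      exact (hE f).mpr ⟨z, hz, hf⟩
    obtain ⟨b, r, hrT, hub, hpairy, hre⟩ := normalize G y hyu hyT.1 hyT.2
    have hbpair : b ∈ pairF G y := by rw [← hpairy]; simp
    have henr : s(v,u) ∉ r.edges := fun hc =>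
      henotW' (hedgesW' y (List.mem_cons_of_mem _ (List.mem_cons_self)) _ ((hre _).mp hc))
    -- the new walk from a to b
    set znew : TP G := ⟨(a, b), q.reverse.append (SimpleGraph.Walk.cons hadj r)⟩ with hznew
    have hznewedges : ∀ f, f ∈ znew.2.edges ↔ f ∈ x.2.edges ∨ f = s(v,u) ∨ f ∈ y.2.edges := by
      intro f
      simp only [znew, SimpleGraph.Walk.edges_append, SimpleGraph.Walk.edges_reverse,
        SimpleGraph.Walk.edges_cons, List.mem_append, List.mem_reverse, List.mem_cons,
        hqe f, hre f]
    have hab : a ≠ b :=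
      fun h => Finset.disjoint_left.mp hxy.1 hapair (h ▸ hbpair)
    refine ⟨znew :: N, ?_, ?_, ?_, ?_⟩
    · intro z hz
      rcases List.mem_cons.mp hz with rfl | hz
      · refine ⟨?_, hab⟩
        rw [SimpleGraph.Walk.isTrail_def]
        simp only [znew, SimpleGraph.Walk.edges_append]
        rw [List.nodup_append]
        refine ⟨(SimpleGraph.Walk.IsTrail.reverse q hqT).edges_nodup,
          ((SimpleGraph.Walk.isTrail_cons hadj r).mpr ⟨hrT, henr⟩).edges_nodup, ?_⟩
        intro f hf f' hf2 hff'
        subst hff'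
        rw [SimpleGraph.Walk.edges_reverse, List.mem_reverse] at hf
        have hfx : f ∈ x.2.edges := (hqe f).mp hf
        simp only [SimpleGraph.Walk.edges_cons, List.mem_cons] at hf2
        rcases hf2 with rfl | hf2
        · exact henotW' (hedgesW' x (List.mem_cons_self) _ hfx)
        · exact Finset.disjoint_left.mp hxy.2 (List.mem_toFinset.mpr hfx)
            (List.mem_toFinset.mpr ((hre f).mp hf2))
      · exact hT z (List.mem_cons_of_mem _ (List.mem_cons_of_mem _ hz))
    · rw [List.pairwise_cons]
      refine ⟨?_, hPN⟩
      intro z hz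
      have hxz := hxRel z (List.mem_cons_of_mem _ hz)
      have hyz := hyRel z hz
      constructor
      · rw [Finset.disjoint_left]
        intro c hc
        simp only [hznew, pairF, Finset.mem_insert, Finset.mem_singleton] at hc
        rcases hc with rfl | rfl
        · exact fun hcz => Finset.disjoint_left.mp hxz.1 hapair hcz
        · exact fun hcz => Finset.disjoint_left.mp hyz.1 hbpair hcz
      · rw [Finset.disjoint_left]
        intro f hf hfz
        rw [List.mem_toFinset] at hf hfz
        rcases (hznewedges f).mp hf with hf | rfl | hf
        · exact Finset.disjoint_left.mp hxz.2 (List.mem_toFinset.mpr hf)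
            (List.mem_toFinset.mpr hfz)
        · exact henotW' (hedgesW' z (by
            exact List.mem_cons_of_mem _ (List.mem_cons_of_mem _ hz)) _ hfz)
        · exact Finset.disjoint_left.mp hyz.2 (List.mem_toFinset.mpr hf)
            (List.mem_toFinset.mpr hfz)
    · intro z
      have hznewpair : pairF G znew = {a, b} := rfl
      have hEN : ∀ c : V, c ∈ pairF G x ∨ c ∈ pairF G y → ∀ z' ∈ N, c ∉ pairF G z' := by
        intro c hc z' hz' hcz'
        rcases hc with hc | hc
        · exact Finset.disjoint_left.mp (hxRel z' (List.mem_cons_of_mem _ hz')).1 hc hcz'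
        · exact Finset.disjoint_left.mp (hyRel z' hz').1 hc hcz'
      by_cases hzv : z = v
      · subst hzv
        simp only [hv, false_iff]
        rintro ⟨z', hz', hzz'⟩
        rcases List.mem_cons.mp hz' with rfl | hz'
        · rw [hznewpair] at hzz'
          simp only [Finset.mem_insert, Finset.mem_singleton] at hzz'
          rcases hzz' with rfl | rfl
          · exact hva rfl
          · exact Finset.disjoint_left.mp hxy.1 hxv hbpair
        · exact hEN _ (Or.inl hxv) z' hz' hzz'
      by_cases hzu : z = u
      · subst hzu
        simp only [hu, false_iff]
        rintro ⟨z', hz', hzz'⟩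
        rcases List.mem_cons.mp hz' with rfl | hz'
        · rw [hznewpair] at hzz'
          simp only [Finset.mem_insert, Finset.mem_singleton] at hzz'
          rcases hzz' with rfl | rfl
          · exact Finset.disjoint_left.mp hxy.1 hapair hyu
          · exact hub rfl
        · exact hEN _ (Or.inr hyu) z' hz' hzz'
      · have hzW : z ∈ graphBoundary W ↔ z ∈ graphBoundary W' := by
          rw [hbe z, if_neg (by tauto)]
        rw [hzW, hB z]
        constructor
        · rintro ⟨z', hz', hzz'⟩
          rcases List.mem_cons.mp hz' with rfl | hz'
          · rw [← hpairx] at hzz'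
            simp only [Finset.mem_insert, Finset.mem_singleton] at hzz'
            rcases hzz' with rfl | rfl
            · exact absurd rfl hzv
            · exact ⟨znew, List.mem_cons_self, by rw [hznewpair]; simp⟩
          rcases List.mem_cons.mp hz' with rfl | hz'
          · rw [← hpairy] at hzz'
            simp only [Finset.mem_insert, Finset.mem_singleton] at hzz'
            rcases hzz' with rfl | rfl
            · exact absurd rfl hzu
            · exact ⟨znew, List.mem_cons_self, by rw [hznewpair]; simp⟩
          · exact ⟨z', List.mem_cons_of_mem _ hz', hzz'⟩
        · rintro ⟨z', hz', hzz'⟩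
          rcases List.mem_cons.mp hz' with rfl | hz'
          · rw [hznewpair] at hzz'
            simp only [Finset.mem_insert, Finset.mem_singleton] at hzz'
            rcases hzz' with rfl | rfl
            · exact ⟨x, List.mem_cons_self, hapair⟩
            · exact ⟨y, List.mem_cons_of_mem _ (List.mem_cons_self), hbpair⟩
          · exact ⟨z', List.mem_cons_of_mem _ (List.mem_cons_of_mem _ hz'), hzz'⟩
    · intro f
      have hWsplit : f ∈ W ↔ f = s(v,u) ∨ f ∈ W' := by
        rw [hW'def, Finset.mem_erase]
        constructor
        · intro hf
          by_cases h : f = s(v,u)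
          · exact Or.inl h
          · exact Or.inr ⟨h, hf⟩
        · rintro (rfl | ⟨_, hf⟩)
          · exact he
          · exact hf
      rw [hWsplit, hE f]
      constructor
      · rintro (rfl | ⟨z, hz, hfz⟩)
        · exact ⟨znew, List.mem_cons_self, (hznewedges _).mpr (Or.inr (Or.inl rfl))⟩
        · rcases List.mem_cons.mp hz with rfl | hz
          · exact ⟨znew, List.mem_cons_self, (hznewedges _).mpr (Or.inl hfz)⟩
          rcases List.mem_cons.mp hz with rfl | hz
          · exact ⟨znew, List.mem_cons_self, (hznewedges _).mpr (Or.inr (Or.inr hfz))⟩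
          · exact ⟨z, List.mem_cons_of_mem _ hz, hfz⟩
      · rintro ⟨z, hz, hfz⟩
        rcases List.mem_cons.mp hz with rfl | hz
        · rcases (hznewedges f).mp hfz with hf | rfl | hf
          · exact Or.inr ⟨x, List.mem_cons_self, hf⟩
          · exact Or.inl rfl
          · exact Or.inr ⟨y, List.mem_cons_of_mem _ (List.mem_cons_self), hf⟩
        · exact Or.inr ⟨z, List.mem_cons_of_mem _ (List.mem_cons_of_mem _ hz), hfz⟩

lemma main :
    ∀ (W : Finset (Sym2 V)), (∀ e ∈ W, e ∈ G.edgeSet) →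
      (SimpleGraph.fromEdgeSet (↑W : Set (Sym2 V))).IsAcyclic → ∃ L, Props G W L := by
  intro W
  induction W using Finset.strongInduction with
  | _ W ih =>
    intro hWE hacyc
    rcases W.eq_empty_or_nonempty with rfl | ⟨e, he⟩
    · refine ⟨[], ?_, ?_, ?_, ?_⟩ <;> simp [mem_graphBoundary]
    · revert he
      induction e using Sym2.ind with
      | _ v u =>
        intro he
        have hadj : G.Adj v u := G.mem_edgeSet.mp (hWE _ he)
        have hsub : W.erase s(v,u) ⊂ W := Finset.erase_ssubset he
        have hWE' : ∀ f ∈ W.erase s(v,u), f ∈ G.edgeSet :=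
          fun f hf => hWE f (Finset.mem_of_mem_erase hf)
        have hle : (SimpleGraph.fromEdgeSet (↑(W.erase s(v,u)) : Set (Sym2 V))) ≤
            SimpleGraph.fromEdgeSet (↑W : Set (Sym2 V)) := by
          apply SimpleGraph.fromEdgeSet_mono
          exact_mod_cast Finset.erase_subset _ _
        have hacyc' : (SimpleGraph.fromEdgeSet
            (↑(W.erase s(v,u)) : Set (Sym2 V))).IsAcyclic := by
          intro a c hc
          exact hacyc (c.mapLe hle) (hc.mapLe hle)
        have hprev := ih _ hsub hWE' hacyc'
        by_cases hv : v ∈ graphBoundary W <;> by_cases hu : u ∈ graphBoundary W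
        · -- both endpoints in boundary: add the single-edge trail
          obtain ⟨L', hL'⟩ := hprev
          have henotW' : s(v,u) ∉ W.erase s(v,u) := Finset.notMem_erase _ _
          have hbe := boundary_erase he
          have hvB' : v ∉ graphBoundary (W.erase s(v,u)) := by
            rw [hbe v, if_pos (Or.inl rfl)]; simpa using hv
          have huB' : u ∉ graphBoundary (W.erase s(v,u)) := by
            rw [hbe u, if_pos (Or.inr rfl)]; simpa using hu
          obtain ⟨hT, hP, hB, hE⟩ := hL'
          have hedgesW' : ∀ z ∈ L', ∀ f ∈ z.2.edges, f ∈ W.erase s(v,u) := by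
            intro z hz f hf
            exact (hE f).mpr ⟨z, hz, hf⟩
          have hpairB' : ∀ z ∈ L', ∀ c ∈ pairF G z, c ∈ graphBoundary (W.erase s(v,u)) := by
            intro z hz c hc
            exact (hB c).mpr ⟨z, hz, hc⟩
          refine ⟨⟨(v, u), SimpleGraph.Walk.cons hadj SimpleGraph.Walk.nil⟩ :: L',
            ?_, ?_, ?_, ?_⟩
          · intro z hz
            rcases List.mem_cons.mp hz with rfl | hz
            · exact ⟨by simp [SimpleGraph.Walk.isTrail_cons], hadj.ne⟩
            · exact hT z hz
          · rw [List.pairwise_cons]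
            refine ⟨?_, hP⟩
            intro z hz
            constructor
            · rw [Finset.disjoint_left]
              intro c hc
              simp only [pairF, Finset.mem_insert, Finset.mem_singleton] at hc
              rcases hc with rfl | rfl
              · exact fun hcz => hvB' (hpairB' z hz _ hcz)
              · exact fun hcz => huB' (hpairB' z hz _ hcz)
            · rw [Finset.disjoint_left]
              intro f hf hfz
              simp only [List.mem_toFinset, SimpleGraph.Walk.edges_cons,
                SimpleGraph.Walk.edges_nil, List.mem_singleton] at hf
              subst hf
              rw [List.mem_toFinset] at hfz
              exact henotW' (hedgesW' z hz _ hfz)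
          · intro z
            by_cases hzv : z = v
            · subst hzv
              simp only [hv, true_iff]
              exact ⟨_, List.mem_cons_self, by simp [pairF]⟩
            by_cases hzu : z = u
            · subst hzu
              simp only [hu, true_iff]
              exact ⟨_, List.mem_cons_self, by simp [pairF]⟩
            · have hzW : z ∈ graphBoundary W ↔ z ∈ graphBoundary (W.erase s(v,u)) := by
                rw [hbe z, if_neg (by tauto)]
              rw [hzW, hB z]
              constructor
              · rintro ⟨z', hz', hzz'⟩
                exact ⟨z', List.mem_cons_of_mem _ hz', hzz'⟩
              · rintro ⟨z', hz', hzz'⟩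
                rcases List.mem_cons.mp hz' with rfl | hz'
                · simp only [pairF, Finset.mem_insert, Finset.mem_singleton] at hzz'
                  tauto
                · exact ⟨z', hz', hzz'⟩
          · intro f
            have hWsplit : f ∈ W ↔ f = s(v,u) ∨ f ∈ W.erase s(v,u) := by
              rw [Finset.mem_erase]
              constructor
              · intro hf
                by_cases h : f = s(v,u)
                · exact Or.inl h
                · exact Or.inr ⟨h, hf⟩
              · rintro (rfl | ⟨_, hf⟩)
                · exact he
                · exact hf
            rw [hWsplit, hE f]
            constructor
            · rintro (rfl | ⟨z, hz, hfz⟩)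
              · exact ⟨_, List.mem_cons_self, by simp⟩
              · exact ⟨z, List.mem_cons_of_mem _ hz, hfz⟩
            · rintro ⟨z, hz, hfz⟩
              rcases List.mem_cons.mp hz with rfl | hz
              · simp only [SimpleGraph.Walk.edges_cons, SimpleGraph.Walk.edges_nil,
                  List.mem_singleton] at hfz
                exact Or.inl hfz
              · exact Or.inr ⟨z, hz, hfz⟩
        · exact step_extend G W hadj he hv hu hprev
        · apply step_extend G W hadj.symm (by rwa [Sym2.eq_swap]) hu hv
          rwa [Sym2.eq_swap]
        · exact step_join G W hadj he hacyc hv hu hprev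

end Stmt7

/-- Let `W` be an acyclic finset of edges of `G` with
`∂W = U` and `|U| = 2n`.  Then there are `n` pairs of vertices
`(v₁,u₁),…,(vₙ,uₙ)` whose union of endpoints is exactly `U`, and pairwise
edge-disjoint trails `tᵢ` from `vᵢ` to `uᵢ` in `G`, whose edge finsets are
pairwise disjoint with union equal to `W`. -/
theorem stmt_7 {V : Type*} [Fintype V] [DecidableEq V] (G : SimpleGraph V)
    (W : Finset (Sym2 V)) (hWE : ∀ e ∈ W, e ∈ G.edgeSet)
    (hacyc : (SimpleGraph.fromEdgeSet (↑W : Set (Sym2 V))).IsAcyclic)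
    (U : Finset V) (n : ℕ) (hbd : graphBoundary W = U) (hU : U.card = 2 * n) :
    ∃ (p : Fin n → V × V) (t : (i : Fin n) → G.Walk (p i).1 (p i).2),
      (∀ i, (t i).IsTrail) ∧
      Finset.univ.biUnion (fun i => ({(p i).1, (p i).2} : Finset V)) = U ∧
      (∀ i j, i ≠ j → Disjoint (t i).edges.toFinset (t j).edges.toFinset) ∧
      Finset.univ.biUnion (fun i => (t i).edges.toFinset) = W := by
  obtain ⟨L, hT, hP, hB, hE⟩ := Stmt7.main G W hWE hacyc
  have hpairs : U = (L.map (Stmt7.pairF G)).foldr (· ∪ ·) ∅ := by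
    ext w
    rw [← hbd, Stmt7.mem_foldr_union]
    exact hB w
  have hdisj : (L.map (Stmt7.pairF G)).Pairwise Disjoint :=
    hP.map _ (fun x y h => h.1)
  have hcard : U.card = (L.map (fun x => (Stmt7.pairF G x).card)).sum := by
    rw [hpairs, Stmt7.card_foldr_union _ hdisj, List.map_map]
    rfl
  have hcard2 : (L.map (fun x => (Stmt7.pairF G x).card)).sum = 2 * L.length := by
    have heq : L.map (fun x => (Stmt7.pairF G x).card) = L.map (fun _ => 2) := by
      apply List.map_congr_left
      intro x hx
      exact Finset.card_pair (hT x hx).2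
    have hsum : ∀ (l : List (Stmt7.TP G)), (l.map (fun _ => (2:ℕ))).sum = 2 * l.length := by
      intro l
      induction l with
      | nil => simp
      | cons a l ihl => simp only [List.map_cons, List.sum_cons, List.length_cons]; omega
    rw [heq, hsum]
  have hlen : L.length = n := by omega
  subst hlen
  refine ⟨fun i => (L.get i).1, fun i => (L.get i).2, ?_, ?_, ?_, ?_⟩
  · intro i
    exact (hT _ (L.get_mem _)).1
  · ext w
    simp only [Finset.mem_biUnion, Finset.mem_univ, true_and]
    rw [← hbd, hB w]
    constructor
    · rintro ⟨i, hw⟩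
      exact ⟨L.get i, L.get_mem _, hw⟩
    · rintro ⟨x, hxL, hw⟩
      obtain ⟨i, hi⟩ := List.get_of_mem hxL
      subst hi
      exact ⟨i, hw⟩
  · intro i j hij
    rcases lt_or_gt_of_ne hij with h | h
    · exact (List.pairwise_iff_get.mp hP i j h).2
    · exact ((List.pairwise_iff_get.mp hP j i h).2).symm
  · ext f
    simp only [Finset.mem_biUnion, Finset.mem_univ, true_and, List.mem_toFinset]
    rw [hE f]
    constructor
    · rintro ⟨i, hf⟩
      exact ⟨L.get i, L.get_mem _, hf⟩
    · rintro ⟨x, hxL, hf⟩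
      obtain ⟨i, hi⟩ := List.get_of_mem hxL
      subst hi
      exact ⟨i, hf⟩
end

section
/- Let G be a connected simple graph on a finite vertex type V and let U be a finset of vertices of even cardinality. Then there exists a finset W of edges of G with ∂W = U. -/
open scoped symmDiff

lemma bd_symmDiff {V : Type*} [Fintype V] [DecidableEq V]
    (A B : Finset (Sym2 V)) :
    graphBoundary (A ∆ B) = graphBoundary A ∆ graphBoundary B := by
  ext v
  simp only [graphBoundary, Finset.mem_symmDiff, Finset.mem_filter, Finset.mem_univ, true_and]
  set fA := A.filter fun e => v ∈ e with hfA
  set fB := B.filter fun e => v ∈ e with hfB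
  have hflt : (A ∆ B).filter (fun e => v ∈ e) = fA ∆ fB := by
    ext e
    simp only [hfA, hfB, Finset.mem_symmDiff, Finset.mem_filter]
    tauto
  have hc : (fA ∆ fB).card + 2 * (fA ∩ fB).card = fA.card + fB.card := by
    have h1 : fA ∆ fB ∪ fA ∩ fB = fA ∪ fB := symmDiff_sup_inf fA fB
    have h2 : Disjoint (fA ∆ fB) (fA ∩ fB) := disjoint_symmDiff_inf fA fB
    rw [two_mul, ← add_assoc, ← Finset.card_union_of_disjoint h2, h1,
      Finset.card_union_add_card_inter]
  have h3 : (fA ∩ fB).card ≤ fA.card := Finset.card_le_card Finset.inter_subset_left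
  have h4 : (fA ∩ fB).card ≤ fB.card := Finset.card_le_card Finset.inter_subset_right
  rw [hflt]
  simp only [Nat.odd_iff] at *
  omega

lemma bd_single {V : Type*} [Fintype V] [DecidableEq V]
    {u w : V} (h : u ≠ w) :
    graphBoundary {s(u, w)} = {u, w} := by
  ext x
  simp only [graphBoundary, Finset.mem_filter, Finset.mem_univ, true_and,
    Finset.filter_singleton, Sym2.mem_iff, Finset.mem_insert, Finset.mem_singleton]
  by_cases hx : x = u ∨ x = w <;> simp [hx, Nat.odd_iff]

lemma bd_path {V : Type*} [Fintype V] [DecidableEq V] {G : SimpleGraph V}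
    {u v : V} (p : G.Walk u v) (hp : p.IsPath) :
    graphBoundary p.edges.toFinset = if u = v then ∅ else {u, v} := by
  induction p with
  | nil => simp [graphBoundary]
  | @cons a b c h q ih =>
    have hq : q.IsPath := hp.of_cons
    have ha : a ∉ q.support := by
      have := hp.support_nodup
      simp at this; exact this.1
    have hne_ab : a ≠ b := h.ne
    have hne_ac : a ≠ c := fun hac => ha (hac ▸ q.end_mem_support)
    have hnm : s(a, b) ∉ q.edges.toFinset := by
      intro hm
      exact ha (q.fst_mem_support_of_mem_edges (List.mem_toFinset.mp hm))
    have hins : (SimpleGraph.Walk.cons h q).edges.toFinset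
        = {s(a, b)} ∆ q.edges.toFinset := by
      ext e
      simp only [SimpleGraph.Walk.edges_cons, List.toFinset_cons, Finset.mem_insert,
        Finset.mem_symmDiff, Finset.mem_singleton]
      constructor
      · rintro (rfl | he)
        · exact Or.inl ⟨rfl, hnm⟩
        · by_cases hee : e = s(a, b)
          · exact Or.inl ⟨hee, hee ▸ hnm⟩
          · exact Or.inr ⟨he, hee⟩
      · rintro (⟨rfl, _⟩ | ⟨he, _⟩)
        · exact Or.inl rfl
        · exact Or.inr he
    rw [hins, bd_symmDiff, bd_single hne_ab, ih hq]
    by_cases hbc : b = c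
    · subst hbc
      simp only [if_pos rfl, if_neg hne_ac]
      ext x
      simp only [Finset.mem_symmDiff, Finset.mem_insert, Finset.mem_singleton,
        Finset.notMem_empty]
      tauto
    · have hb : b ∈ q.support := q.start_mem_support
      simp only [if_neg hbc, if_neg hne_ac]
      ext x
      simp only [Finset.mem_symmDiff, Finset.mem_insert, Finset.mem_singleton]
      constructor
      · rintro (⟨h1, h2⟩ | ⟨h1, h2⟩)
        · rcases h1 with rfl | rfl
          · exact Or.inl rfl
          · exact absurd (Or.inl rfl) h2
        · rcases h1 with rfl | rfl
          · exact absurd (Or.inr rfl) h2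
          · exact Or.inr rfl
      · rintro (rfl | rfl)
        · exact Or.inl ⟨Or.inl rfl, by push_neg; exact ⟨hne_ab, hne_ac⟩⟩
        · exact Or.inr ⟨Or.inr rfl, by push_neg; exact ⟨fun hh => hne_ac hh.symm, fun hh => hbc hh.symm⟩⟩

/-- In a connected simple graph `G`, every finset `U` of
vertices of even cardinality is the boundary of some finset `W` of edges of
`G`. -/
theorem stmt_10 {V : Type*} [Fintype V] [DecidableEq V] (G : SimpleGraph V)
    (hconn : G.Connected) (U : Finset V) (hU : Even U.card) :
    ∃ W : Finset (Sym2 V), (∀ e ∈ W, e ∈ G.edgeSet) ∧ graphBoundary W = U := by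
  classical
  induction U using Finset.strongInduction with
  | _ U ih =>
    rcases U.eq_empty_or_nonempty with rfl | ⟨u, hu⟩
    · exact ⟨∅, by simp, by simp [graphBoundary]⟩
    · have hcard : 2 ≤ U.card := by
        rcases hU with ⟨k, hk⟩
        have : 1 ≤ U.card := Finset.card_pos.mpr ⟨u, hu⟩
        omega
      have hne : (U.erase u).Nonempty := by
        rw [← Finset.card_pos, Finset.card_erase_of_mem hu]; omega
      obtain ⟨v, hv⟩ := hne
      have hvu : v ≠ u := Finset.ne_of_mem_erase hv
      have hvU : v ∈ U := Finset.mem_of_mem_erase hv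
      set U' := (U.erase u).erase v with hU'def
      have hsub : U' ⊂ U :=
        Finset.ssubset_of_subset_of_ssubset (Finset.erase_subset _ _) (Finset.erase_ssubset hu)
      have hU'card : U'.card = U.card - 2 := by
        rw [hU'def, Finset.card_erase_of_mem hv, Finset.card_erase_of_mem hu]; omega
      have hU'even : Even U'.card := by
        rcases hU with ⟨k, hk⟩
        exact ⟨k - 1, by omega⟩
      obtain ⟨W₁, hW₁e, hW₁b⟩ := ih U' hsub hU'even
      obtain ⟨p⟩ := hconn.preconnected u v
      set q := p.toPath with hq
      have hqp : (q : G.Walk u v).IsPath := p.toPath.2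
      set W₀ := (q : G.Walk u v).edges.toFinset with hW₀
      refine ⟨W₀ ∆ W₁, ?_, ?_⟩
      · intro e he
        rw [Finset.mem_symmDiff] at he
        rcases he with ⟨he, _⟩ | ⟨he, _⟩
        · exact (q : G.Walk u v).edges_subset_edgeSet (List.mem_toFinset.mp he)
        · exact hW₁e e he
      · rw [bd_symmDiff, hW₁b, bd_path _ hqp, if_neg (Ne.symm hvu)]
        ext x
        simp only [Finset.mem_symmDiff, Finset.mem_insert, Finset.mem_singleton, hU'def,
          Finset.mem_erase]
        constructor
        · rintro (⟨rfl | rfl, _⟩ | ⟨⟨_, _, hx⟩, _⟩) <;> assumption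
        · intro hx
          by_cases h1 : x = u ∨ x = v
          · exact Or.inl ⟨h1, by rintro ⟨h2, h3, _⟩; tauto⟩
          · push_neg at h1
            exact Or.inr ⟨⟨h1.2, h1.1, hx⟩, by tauto⟩
end

section
/- Fix d ≥ 1 and a finite vertex type V. Let K be a finset of d-simplices with strictly positive real weights, let U be a nonempty finset of (d−1)-simplices, and let W ⊆ K satisfy ∂W = U with w(W) minimal among all finsets W' ⊆ K with ∂W' = U. Let f be any function assigning to every nonempty finset X of (d−1)-simplices an element f(X) ∈ X. Then there is an enumeration σ₁,…,σₖ of the elements of W such that, setting U₀ = U and Uᵢ = U_{i−1} △ ∂{σᵢ} for 1 ≤ i ≤ k, one has: Uᵢ ≠ ∅ for all i < k, Uₖ = ∅, and f(U_{i−1}) ⊂ σᵢ for each 1 ≤ i ≤ k. -/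
/-- The boundary of a finset `W` of simplices over vertex type `V`:
the finsets of `V` of cardinality `k` that are subsets of an odd number of
members of `W`.  (For a finset of `d`-simplices, i.e. finsets of cardinality
`d+1`, the boundary consists of `(d-1)`-simplices, obtained with `k = d`.) -/
def simpBoundary (V : Type*) [Fintype V] [DecidableEq V] (k : ℕ)
    (W : Finset (Finset V)) : Finset (Finset V) :=
  ((Finset.univ : Finset V).powersetCard k).filter
    fun ρ => Odd ((W.filter fun σ => ρ ⊆ σ).card)

lemma bd_empty (V : Type*) [Fintype V] [DecidableEq V] (d : ℕ) :
    simpBoundary V d (∅ : Finset (Finset V)) = ∅ := by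
  simp [simpBoundary]

lemma bd_erase (V : Type*) [Fintype V] [DecidableEq V] (d : ℕ)
    (W : Finset (Finset V)) (σ : Finset V) (hσ : σ ∈ W) :
    symmDiff (simpBoundary V d W) (simpBoundary V d {σ}) =
      simpBoundary V d (W.erase σ) := by
  ext ρ
  simp only [Finset.mem_symmDiff, simpBoundary, Finset.mem_filter,
    Finset.mem_powersetCard, Finset.subset_univ, true_and, Finset.filter_erase,
    Finset.filter_singleton]
  by_cases hρσ : ρ ⊆ σ
  · have hm : σ ∈ W.filter fun σ => ρ ⊆ σ := Finset.mem_filter.2 ⟨hσ, hρσ⟩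
    have h1 : ((W.filter fun σ => ρ ⊆ σ).erase σ).card
        = (W.filter fun σ => ρ ⊆ σ).card - 1 := Finset.card_erase_of_mem hm
    have h2 : 1 ≤ (W.filter fun σ => ρ ⊆ σ).card := Finset.card_pos.2 ⟨σ, hm⟩
    simp only [hρσ, if_pos, Finset.card_singleton, h1, Nat.odd_iff] at *
    by_cases hρd : ρ.card = d
    · simp only [hρd, true_and, not_true, and_true, not_and, Classical.not_imp]
      constructor
      · rintro (⟨-, h⟩ | h)
        · exact h.elim
        · omega
      · intro h; right; omega
    · simp [hρd]
  · have h1 : (W.filter fun σ => ρ ⊆ σ).erase σ = W.filter fun σ => ρ ⊆ σ := by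
      apply Finset.erase_eq_of_notMem
      simp [hρσ]
    simp [hρσ, h1]

lemma bd_sdiff (V : Type*) [Fintype V] [DecidableEq V] (d : ℕ)
    (W W'' : Finset (Finset V)) (h : W'' ⊆ W) :
    simpBoundary V d (W \ W'') =
      symmDiff (simpBoundary V d W) (simpBoundary V d W'') := by
  ext ρ
  have hfs : (W \ W'').filter (fun σ => ρ ⊆ σ)
      = W.filter (fun σ => ρ ⊆ σ) \ W''.filter (fun σ => ρ ⊆ σ) := by
    ext τ; simp [Finset.mem_sdiff, Finset.mem_filter]; tauto
  have hsub : W''.filter (fun σ => ρ ⊆ σ) ⊆ W.filter (fun σ => ρ ⊆ σ) :=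
    Finset.filter_subset_filter _ h
  have hcard := Finset.card_sdiff_of_subset hsub
  have hle := Finset.card_le_card hsub
  simp only [Finset.mem_symmDiff, simpBoundary, Finset.mem_filter,
    Finset.mem_powersetCard, Finset.subset_univ, true_and, hfs, hcard, Nat.odd_iff]
  by_cases hρd : ρ.card = d
  · simp only [hρd, true_and]
    constructor
    · intro h
      by_cases hb : (Finset.filter (fun σ => ρ ⊆ σ) W'').card % 2 = 1
      · exact Or.inr ⟨hb, by omega⟩
      · exact Or.inl ⟨by omega, hb⟩
    · rintro (⟨h, h'⟩ | ⟨h, h'⟩) <;> omega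
  · simp [hρd]

lemma bd_card (V : Type*) [Fintype V] [DecidableEq V] (d : ℕ)
    (W : Finset (Finset V)) : ∀ ρ ∈ simpBoundary V d W, ρ.card = d := by
  intro ρ hρ
  simp only [simpBoundary, Finset.mem_filter, Finset.mem_powersetCard] at hρ
  exact hρ.1.2

lemma aux_main (d : ℕ) (V : Type*) [Fintype V] [DecidableEq V]
    (f : Finset (Finset V) → Finset V)
    (hf : ∀ X : Finset (Finset V), X ≠ ∅ → (∀ ρ ∈ X, ρ.card = d) → f X ∈ X) :
    ∀ n (W : Finset (Finset V)), W.card = n →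
      (∀ σ ∈ W, σ.card = d + 1) →
      (∀ W'' ⊆ W, W'' ≠ ∅ → simpBoundary V d W'' ≠ ∅) →
      ∃ l : List (Finset V), l.Nodup ∧ l.toFinset = W ∧
        (∀ i, i < l.length →
          (l.take i).foldl (fun X σ => symmDiff X (simpBoundary V d {σ}))
            (simpBoundary V d W) ≠ ∅) ∧
        l.foldl (fun X σ => symmDiff X (simpBoundary V d {σ}))
          (simpBoundary V d W) = ∅ ∧
        ∀ (i : ℕ) (h : i < l.length),
          f ((l.take i).foldl (fun X σ => symmDiff X (simpBoundary V d {σ}))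
            (simpBoundary V d W)) ⊂ l.get ⟨i, h⟩ := by
  intro n
  induction n with
  | zero =>
    intro W hcard _ _
    refine ⟨[], List.nodup_nil, ?_, ?_, ?_, ?_⟩
    · simp [Finset.card_eq_zero.1 hcard]
    · intro i hi; simp at hi
    · simpa [Finset.card_eq_zero.1 hcard] using bd_empty V d
    · intro i hi; simp at hi
  | succ n ih =>
    intro W hcard hWd hne
    have hWne : W ≠ ∅ := by
      intro h; rw [h] at hcard; simp at hcard
    have hUne : simpBoundary V d W ≠ ∅ := hne W (le_refl _) hWne
    have hρmem : f (simpBoundary V d W) ∈ simpBoundary V d W :=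
      hf _ hUne (bd_card V d W)
    set ρ := f (simpBoundary V d W) with hρdef
    have hρd : ρ.card = d := bd_card V d W ρ hρmem
    have hodd : Odd ((W.filter fun σ => ρ ⊆ σ).card) := by
      have h := hρmem
      simp only [simpBoundary, Finset.mem_filter, Finset.mem_powersetCard] at h
      exact h.2
    have hpos : 0 < (W.filter fun σ => ρ ⊆ σ).card := by
      rcases hodd with ⟨k, hk⟩; omega
    obtain ⟨σ, hσmem⟩ := Finset.card_pos.1 hpos
    obtain ⟨hσW, hρσ⟩ := Finset.mem_filter.1 hσmem
    have hss : ρ ⊂ σ := by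
      refine HasSubset.Subset.ssubset_of_ne hρσ ?_
      intro h
      have := hWd σ hσW
      rw [← h, hρd] at this
      omega
    set W' := W.erase σ with hW'def
    have hW'card : W'.card = n := by
      rw [hW'def, Finset.card_erase_of_mem hσW, hcard]; omega
    have hW'sub : W' ⊆ W := Finset.erase_subset _ _
    have hkey : symmDiff (simpBoundary V d W) (simpBoundary V d {σ}) =
        simpBoundary V d W' := bd_erase V d W σ hσW
    obtain ⟨l', hnd', htf', hne', hfin', hget'⟩ :=
      ih W' hW'card (fun τ hτ => hWd τ (hW'sub hτ))
        (fun W'' h h' => hne W'' (h.trans hW'sub) h')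
    refine ⟨σ :: l', ?_, ?_, ?_, ?_, ?_⟩
    · refine List.nodup_cons.2 ⟨?_, hnd'⟩
      intro h
      have : σ ∈ W' := htf' ▸ List.mem_toFinset.2 h
      exact (Finset.notMem_erase σ W) this
    · rw [List.toFinset_cons, htf', hW'def, Finset.insert_erase hσW]
    · intro i hi
      match i with
      | 0 => simpa using hUne
      | (j+1) =>
        have hj : j < l'.length := by simpa using hi
        simpa [hkey] using hne' j hj
    · simpa [hkey] using hfin'
    · intro i hi
      match i with
      | 0 => simpa using hss
      | (j+1) =>
        have hj : j < l'.length := by simpa using hi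
        simpa [hkey] using hget' j hj

/-- Let `K` be a finset of `d`-simplices with strictly
positive weights, `U` a nonempty finset of `(d-1)`-simplices, and `W ⊆ K` a
minimum-weight bounding chain of `U`.  For any choice function `f` picking an
element of every nonempty finset of `(d-1)`-simplices, there is an
enumeration `σ₁,…,σₖ` of `W` such that, with `U₀ = U` and
`Uᵢ = U_{i-1} △ ∂{σᵢ}`, one has `Uᵢ ≠ ∅` for `i < k`, `Uₖ = ∅`, and
`f(U_{i-1}) ⊂ σᵢ` for each `1 ≤ i ≤ k`. -/
theorem stmt_13 (d : ℕ) (hd : 1 ≤ d) (V : Type*) [Fintype V] [DecidableEq V]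
    (K : Finset (Finset V)) (hK : ∀ σ ∈ K, σ.card = d + 1)
    (w : Finset V → ℝ) (hw : ∀ σ ∈ K, 0 < w σ)
    (U : Finset (Finset V)) (hUd : ∀ ρ ∈ U, ρ.card = d) (hUne : U ≠ ∅)
    (W : Finset (Finset V)) (hWK : W ⊆ K) (hbd : simpBoundary V d W = U)
    (hmin : ∀ W' ⊆ K, simpBoundary V d W' = U → ∑ σ ∈ W, w σ ≤ ∑ σ ∈ W', w σ)
    (f : Finset (Finset V) → Finset V)
    (hf : ∀ X : Finset (Finset V), X ≠ ∅ → (∀ ρ ∈ X, ρ.card = d) → f X ∈ X) :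
    ∃ l : List (Finset V), l.Nodup ∧ l.toFinset = W ∧
      (∀ i, i < l.length →
        (l.take i).foldl (fun X σ => symmDiff X (simpBoundary V d {σ})) U ≠ ∅) ∧
      l.foldl (fun X σ => symmDiff X (simpBoundary V d {σ})) U = ∅ ∧
      ∀ (i : ℕ) (h : i < l.length),
        f ((l.take i).foldl (fun X σ => symmDiff X (simpBoundary V d {σ})) U)
          ⊂ l.get ⟨i, h⟩ := by
  subst hbd
  apply aux_main d V f hf W.card W rfl (fun σ hσ => hK σ (hWK hσ))
  intro W'' hsub hne hbd0
  have hW0 : simpBoundary V d (W \ W'') = simpBoundary V d W := by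
    rw [bd_sdiff V d W W'' hsub, hbd0]
    simp
  have hle := hmin (W \ W'') ((Finset.sdiff_subset).trans hWK) hW0
  have hsum : ∑ σ ∈ W \ W'', w σ + ∑ σ ∈ W'', w σ = ∑ σ ∈ W, w σ :=
    Finset.sum_sdiff hsub
  have hpos : 0 < ∑ σ ∈ W'', w σ := by
    apply Finset.sum_pos (fun σ hσ => hw σ (hWK (hsub hσ)))
    exact Finset.nonempty_iff_ne_empty.2 hne
  linarith
end

section
/- Let G be a finite simple graph, let α ≥ 1, and let V₁,…,V_α be a partition of the vertices of G. Define a graph H whose vertices are pairs (i, γ) where 1 ≤ i ≤ α and γ : Vᵢ → Fin 3 is a proper 3-coloring of the subgraph of G induced on Vᵢ, with an edge between (i, γ) and (i', γ') exactly when i ≠ i' and the combined function on Vᵢ ∪ V_{i'} given by γ and γ' is a proper 3-coloring of the subgraph of G induced on Vᵢ ∪ V_{i'}. Then G admits a proper 3-coloring if and only if H contains a clique with exactly one vertex (i, γᵢ) for each index 1 ≤ i ≤ α. -/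
/-- `γ : {x // x ∈ A} → Fin 3` is a proper 3-coloring of the subgraph of `G`
induced on the finset `A`. -/
def ProperOnSub {W : Type*} (G : SimpleGraph W) (A : Finset W)
    (γ : {x : W // x ∈ A} → Fin 3) : Prop :=
  ∀ x y : {x : W // x ∈ A}, G.Adj x.1 y.1 → γ x ≠ γ y

/-- A (total) function `κ : W → Fin 3` is a proper 3-coloring of the subgraph
of `G` induced on the finset `A`. -/
def ProperOnTot {W : Type*} (G : SimpleGraph W) (A : Finset W)
    (κ : W → Fin 3) : Prop :=
  ∀ x ∈ A, ∀ y ∈ A, G.Adj x y → κ x ≠ κ y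

/-- The vertices of the graph `H`: pairs `(i, γ)` where `γ` is a proper
3-coloring of the subgraph of `G` induced on `V i`. -/
def CliqueVert {W : Type*} (G : SimpleGraph W) {α : ℕ}
    (V : Fin α → Finset W) : Type _ :=
  Σ i : Fin α, {γ : {x : W // x ∈ V i} → Fin 3 // ProperOnSub G (V i) γ}

/-- The graph `H`: `(i, γ)` and `(i', γ')` are adjacent exactly when `i ≠ i'`
and the combined function on `V i ∪ V i'` given by `γ` and `γ'` (i.e. any
common extension `κ` of `γ` and `γ'`) is a proper 3-coloring of the subgraph
of `G` induced on `V i ∪ V i'`. -/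
def CliqueGraph {W : Type*} [DecidableEq W] (G : SimpleGraph W) {α : ℕ}
    (V : Fin α → Finset W) : SimpleGraph (CliqueVert G V) where
  Adj a b := a.1 ≠ b.1 ∧ ∃ κ : W → Fin 3,
      (∀ x (hx : x ∈ V a.1), κ x = a.2.1 ⟨x, hx⟩) ∧
      (∀ x (hx : x ∈ V b.1), κ x = b.2.1 ⟨x, hx⟩) ∧
      ProperOnTot G (V a.1 ∪ V b.1) κ
  symm := ⟨by
    rintro a b ⟨hne, κ, h1, h2, h3⟩
    exact ⟨hne.symm, κ, h2, h1, by rwa [Finset.union_comm]⟩⟩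
  loopless := ⟨by rintro a ⟨hne, -⟩; exact hne rfl⟩

/-- Let `G` be a finite simple graph, `α ≥ 1`, and
`V₁,…,V_α` a partition of the vertices of `G`.  Then `G` admits a proper
3-coloring iff the graph `H` (= `CliqueGraph G V`) contains a clique with
exactly one vertex `(i, γᵢ)` for each index `i`. -/
theorem stmt_15 {W : Type*} [Fintype W] [DecidableEq W] (G : SimpleGraph W)
    (α : ℕ) (hα : 1 ≤ α) (V : Fin α → Finset W)
    (hdisj : ∀ i j : Fin α, i ≠ j → Disjoint (V i) (V j))
    (hcover : Finset.univ.biUnion V = (Finset.univ : Finset W)) :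
    G.Colorable 3 ↔
      ∃ c : (i : Fin α) → {γ : {x : W // x ∈ V i} → Fin 3 // ProperOnSub G (V i) γ},
        (CliqueGraph G V).IsClique
          (Set.range fun i => (⟨i, c i⟩ : CliqueVert G V)) := by
  constructor
  · rintro ⟨C⟩
    refine ⟨fun i => ⟨fun x => C x.1, fun x y h => C.valid h⟩, ?_⟩
    rintro _ ⟨i, rfl⟩ _ ⟨j, rfl⟩ hne
    have hij : i ≠ j := by rintro rfl; exact hne rfl
    exact ⟨hij, fun w => C w, fun x hx => rfl, fun x hx => rfl,
      fun x _ y _ h => C.valid h⟩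
  · rintro ⟨c, hc⟩
    have hex : ∀ x : W, ∃ i, x ∈ V i := by
      intro x
      have hx : x ∈ Finset.univ.biUnion V := hcover.symm ▸ Finset.mem_univ x
      obtain ⟨i, -, hi⟩ := Finset.mem_biUnion.mp hx
      exact ⟨i, hi⟩
    choose idx hidx using hex
    set κ : W → Fin 3 := fun x => (c (idx x)).1 ⟨x, hidx x⟩ with hκ
    have hproper : ∀ x y, G.Adj x y → κ x ≠ κ y := by
      intro x y hadj
      by_cases h : idx x = idx y
      · have key : ∀ (j : Fin α) (h' : idx y = j), (c j).1 ⟨y, h' ▸ hidx y⟩ = κ y := by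
          rintro j rfl; rfl
        intro he
        apply (c (idx x)).2 ⟨x, hidx x⟩ ⟨y, h ▸ hidx y⟩ hadj
        rw [key (idx x) h.symm]
        exact he
      · have hne : (⟨idx x, c (idx x)⟩ : CliqueVert G V) ≠ ⟨idx y, c (idx y)⟩ := by
          intro he; exact h (congrArg Sigma.fst he)
        obtain ⟨-, κ', h1, h2, h3⟩ := hc ⟨idx x, rfl⟩ ⟨idx y, rfl⟩ hne
        intro he
        exact h3 x (Finset.mem_union_left _ (hidx x)) y
          (Finset.mem_union_right _ (hidx y)) hadj
          (by rw [h1 x (hidx x), h2 y (hidx y)]; exact he)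
    exact ⟨SimpleGraph.Coloring.mk κ fun h => hproper _ _ h⟩
end
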